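/- arXiv:2008.06501 — 5 statements merged into one kernel-verified Lean document; each statement's English description precedes it below -/
import Mathlib

section
/- Let (S,+) be a commutative cancellative semigroup and let (S−S,+) denote its difference group. If A ⊆ S is quasi-central in S, then A is quasi-central in S−S. -/
universe u v

/-- A subset `A` of an additive semigroup `T` is *piecewise syndetic* if there is a finite
nonempty `G ⊆ T` such that for every finite nonempty `F ⊆ T` there is `x ∈ T` with
`F + x ⊆ ⋃_{t ∈ G} (-t + A)`, where `-t + A = {y | t + y ∈ A}`. -/
def AddPiecewiseSyndetic {T : Type u} [Add T] (A : Set T) : Prop :=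
  ∃ G : Finset T, G.Nonempty ∧ ∀ F : Finset T, F.Nonempty →
    ∃ x : T, ∀ f ∈ F, ∃ t ∈ G, t + (f + x) ∈ A

/-- A subset `A` of an additive semigroup `T` is *quasi-central* if there is a downward
directed family `⟨C_i⟩_{i ∈ I}` of subsets of `A` (here `r i j` means `i ≥ j`, `(I,≥)` is
a directed set and `i ≥ j → C_i ⊆ C_j`) such that (1) for each `i ∈ I` and `x ∈ C_i`
there is `j ∈ I` with `C_j ⊆ -x + C_i`, and (2) each `C_i` is piecewise syndetic. -/
def AddQuasiCentral {T : Type u} [Add T] (A : Set T) : Prop :=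
  ∃ (I : Type u) (r : I → I → Prop) (C : I → Set T),
    Nonempty I ∧ (∀ i, r i i) ∧ (∀ i j k, r i j → r j k → r i k) ∧
    (∀ i j, ∃ k, r k i ∧ r k j) ∧ (∀ i j, r i j → C i ⊆ C j) ∧
    (∀ i, C i ⊆ A) ∧
    (∀ i, ∀ x ∈ C i, ∃ j, C j ⊆ {y | x + y ∈ C i}) ∧
    (∀ i, AddPiecewiseSyndetic (C i))

/-- Let `(S,+)` be a commutative cancellative semigroup and let `(G,+)` together with the
injective additive embedding `φ : S → G` be its difference group.  If `A ⊆ S` is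
quasi-central in `S`, then `A` is quasi-central in `G = S - S`. -/
theorem addQuasiCentral_image_of_addQuasiCentral {S : Type u} {G : Type v}
    [AddCommSemigroup S] [IsCancelAdd S] [AddCommGroup G]
    (φ : S → G) (hinj : Function.Injective φ)
    (hhom : ∀ x y : S, φ (x + y) = φ x + φ y)
    (hdiff : ∀ g : G, ∃ a b : S, g = φ a - φ b)
    (A : Set S) (hA : AddQuasiCentral A) : AddQuasiCentral (φ '' A) := by
  classical
  obtain ⟨I, r, C, hne, hrefl, htrans, hdir, hmono, hsub, hshift, hps⟩ := hA
  have hS : Nonempty S := by obtain ⟨a, b, -⟩ := hdiff 0; exact ⟨a⟩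
  -- common denominator: any finite set of group elements can be shifted into the image of S
  have hcom : ∀ F : Finset G, ∃ b : S, ∀ f ∈ F, ∃ a : S, f + φ b = φ a := by
    intro F
    induction F using Finset.induction with
    | empty => exact ⟨hS.some, fun f hf => absurd hf (Finset.notMem_empty f)⟩
    | @insert f F hfF ih =>
      obtain ⟨b, hb⟩ := ih
      obtain ⟨a₀, b₀, hf⟩ := hdiff f
      refine ⟨b + b₀, fun g hg => ?_⟩
      rcases Finset.mem_insert.mp hg with rfl | hgF
      · exact ⟨a₀ + b, by rw [hhom, hhom, hf]; abel⟩
      · obtain ⟨ag, hag⟩ := hb g hgF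
        exact ⟨ag + b₀, by rw [hhom, hhom, ← add_assoc, hag]⟩
  -- piecewise syndetic sets have piecewise syndetic images
  have hpsim : ∀ B : Set S, AddPiecewiseSyndetic B → AddPiecewiseSyndetic (φ '' B) := by
    rintro B ⟨G₀, hG₀ne, hG₀⟩
    refine ⟨G₀.image φ, hG₀ne.image φ, fun F hFne => ?_⟩
    obtain ⟨b, hb⟩ := hcom F
    choose a ha using hb
    set F' : Finset S := F.attach.image (fun f => a f.1 f.2) with hF'
    have hF'ne : F'.Nonempty :=
      Finset.Nonempty.image (Finset.attach_nonempty_iff.mpr hFne) _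
    obtain ⟨x, hx⟩ := hG₀ F' hF'ne
    refine ⟨φ b + φ x, fun f hf => ?_⟩
    obtain ⟨t, ht, htC⟩ :=
      hx (a f hf) (Finset.mem_image.mpr ⟨⟨f, hf⟩, Finset.mem_attach _ _, rfl⟩)
    refine ⟨φ t, Finset.mem_image.mpr ⟨t, ht, rfl⟩, ?_⟩
    have key : φ t + (f + (φ b + φ x)) = φ (t + (a f hf + x)) := by
      rw [hhom, hhom, ← ha f hf]; abel
    rw [key]
    exact ⟨_, htC, rfl⟩
  refine ⟨{D : Set G // ∃ i, D = φ '' C i}, fun D E => D.1 ⊆ E.1,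
    fun D => D.1, ⟨⟨φ '' C hne.some, hne.some, rfl⟩⟩,
    fun D => subset_rfl, fun D E K h1 h2 => h1.trans h2, ?_,
    fun D E h => h, ?_, ?_, ?_⟩
  · rintro ⟨D, i, rfl⟩ ⟨E, j, rfl⟩
    obtain ⟨k, hki, hkj⟩ := hdir i j
    exact ⟨⟨φ '' C k, k, rfl⟩, Set.image_mono (hmono _ _ hki),
      Set.image_mono (hmono _ _ hkj)⟩
  · rintro ⟨D, i, rfl⟩
    exact Set.image_mono (hsub i)
  · rintro ⟨D, i, rfl⟩ x hx
    obtain ⟨s, hs, rfl⟩ := hx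
    obtain ⟨j, hj⟩ := hshift i s hs
    refine ⟨⟨φ '' C j, j, rfl⟩, ?_⟩
    rintro y ⟨t, ht, rfl⟩
    show φ s + φ t ∈ φ '' C i
    rw [← hhom]
    exact ⟨s + t, hj ht, rfl⟩
  · rintro ⟨D, i, rfl⟩
    exact hpsim _ (hps i)
end

section
/- Let (S,+) be a commutative cancellative semigroup and let (S−S,+) denote its difference group. If A ⊆ S is central in S, then A is central in S−S. -/
universe u v

/-- A family `𝒜` of subsets of an additive semigroup `T` is *collectionwise piecewise
syndetic* if there exist functions `K` from the finite nonempty subfamilies of `𝒜` to the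
finite nonempty subsets of `T`, and `x` from (finite nonempty subfamilies of `𝒜`) ×
(finite nonempty subsets of `T`) to `T`, such that for every finite nonempty `F ⊆ T` and
all finite nonempty subfamilies `ℱ ⊆ ℋ` of `𝒜` one has
`F + x(ℋ,F) ⊆ ⋃_{t ∈ K(ℱ)} (-t + ⋂ℱ)`. -/
def AddCollectionwisePS {T : Type u} [Add T] (𝒜 : Set (Set T)) : Prop :=
  ∃ (K : {ℱ : Finset (Set T) // ℱ.Nonempty ∧ (↑ℱ : Set (Set T)) ⊆ 𝒜} →
        {B : Finset T // B.Nonempty})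
    (x : {ℱ : Finset (Set T) // ℱ.Nonempty ∧ (↑ℱ : Set (Set T)) ⊆ 𝒜} →
        {F : Finset T // F.Nonempty} → T),
    ∀ (F : {F : Finset T // F.Nonempty})
      (ℱ ℋ : {ℱ : Finset (Set T) // ℱ.Nonempty ∧ (↑ℱ : Set (Set T)) ⊆ 𝒜}),
      ℱ.1 ⊆ ℋ.1 →
      ∀ f ∈ F.1, ∃ t ∈ (K ℱ).1, t + (f + x ℋ F) ∈ ⋂₀ (↑ℱ.1 : Set (Set T))

/-- A subset `A` of an additive semigroup `T` is *central* if there is a downward directed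
family `⟨C_i⟩_{i ∈ I}` of subsets of `A` (here `r i j` means `i ≥ j`, `(I,≥)` is a
directed set and `i ≥ j → C_i ⊆ C_j`) such that (1) for each `i ∈ I` and `x ∈ C_i` there
is `j ∈ I` with `C_j ⊆ -x + C_i`, and (2) the family `{C_i : i ∈ I}` is collectionwise
piecewise syndetic in `T`. -/
def AddCentral {T : Type u} [Add T] (A : Set T) : Prop :=
  ∃ (I : Type u) (r : I → I → Prop) (C : I → Set T),
    Nonempty I ∧ (∀ i, r i i) ∧ (∀ i j k, r i j → r j k → r i k) ∧
    (∀ i j, ∃ k, r k i ∧ r k j) ∧ (∀ i j, r i j → C i ⊆ C j) ∧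
    (∀ i, C i ⊆ A) ∧
    (∀ i, ∀ x ∈ C i, ∃ j, C j ⊆ {y | x + y ∈ C i}) ∧
    AddCollectionwisePS (Set.range C)

/-- Let `(S,+)` be a commutative cancellative semigroup and let `(G,+)` together with the
injective additive embedding `φ : S → G` be its difference group.  If `A ⊆ S` is central
in `S`, then `A` is central in `G = S - S`. -/
theorem addCentral_image_of_addCentral {S : Type u} {G : Type v}
    [AddCommSemigroup S] [IsCancelAdd S] [AddCommGroup G]
    (φ : S → G) (hinj : Function.Injective φ)
    (hhom : ∀ x y : S, φ (x + y) = φ x + φ y)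
    (hdiff : ∀ g : G, ∃ a b : S, g = φ a - φ b)
    (A : Set S) (hA : AddCentral A) : AddCentral (φ '' A) := by
  classical
  obtain ⟨I, r, C, ⟨i₀⟩, hrefl, htrans, hdir, hmono, hsubA, hshift, K, x, hK⟩ := hA
  have hS0 : Nonempty S := by obtain ⟨a, _, _⟩ := hdiff 0; exact ⟨a⟩
  obtain ⟨s₀⟩ := hS0
  -- key: uniform shift into the image of φ
  have key : ∀ F : Finset G, ∃ c : S, ∀ f ∈ F, ∃ s : S, φ s = f + φ c := by
    intro F
    induction F using Finset.induction with
    | empty => exact ⟨s₀, by simp⟩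
    | insert _ _ hf ih =>
      rename_i f F
      obtain ⟨c, hc⟩ := ih
      obtain ⟨a, b, hab⟩ := hdiff f
      refine ⟨b + c, ?_⟩
      intro g hg
      rcases Finset.mem_insert.mp hg with h | h
      · subst h
        refine ⟨a + c, ?_⟩
        rw [hhom, hab, hhom]
        abel
      · obtain ⟨s, hs⟩ := hc g h
        refine ⟨s + b, ?_⟩
        rw [hhom, hs, hhom]
        abel
  choose cF hcF using key
  choose sF hsF using hcF
  -- the index type for the family in G
  refine ⟨{B : Set G // ∃ i, φ '' C i = B}, fun B B' => B.1 ⊆ B'.1, fun B => B.1,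
    ⟨⟨φ '' C i₀, ⟨i₀, rfl⟩⟩⟩, fun _ => subset_rfl, fun _ _ _ h h' => h.trans h',
    ?_, fun _ _ h => h, ?_, ?_, ?_⟩
  · -- directedness
    rintro ⟨B, i, hi⟩ ⟨B', j, hj⟩
    obtain ⟨k, hki, hkj⟩ := hdir i j
    exact ⟨⟨φ '' C k, ⟨k, rfl⟩⟩, by
      simp only [← hi]; exact Set.image_mono (hmono _ _ hki), by
      simp only [← hj]; exact Set.image_mono (hmono _ _ hkj)⟩
  · -- contained in φ '' A
    rintro ⟨B, i, hi⟩ g hg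
    have hg' : g ∈ φ '' C i := by rw [hi]; exact hg
    exact Set.image_mono (hsubA i) hg'
  · -- shift condition
    rintro ⟨B, i, hi⟩ g hg
    have hg' : g ∈ φ '' C i := by rw [hi]; exact hg
    obtain ⟨x0, hx0, rfl⟩ := hg'
    obtain ⟨j, hj⟩ := hshift i x0 hx0
    refine ⟨⟨φ '' C j, ⟨j, rfl⟩⟩, ?_⟩
    rintro _ ⟨z, hz, rfl⟩
    have : x0 + z ∈ C i := hj hz
    show φ x0 + φ z ∈ B
    rw [← hhom, ← hi]
    exact ⟨x0 + z, this, rfl⟩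
  · -- collectionwise piecewise syndetic
    have hrange : Set.range (fun B : {B : Set G // ∃ i, φ '' C i = B} => B.1)
        = {B : Set G | ∃ i, φ '' C i = B} := Subtype.range_val
    rw [AddCollectionwisePS, hrange]
    set 𝒜' : Set (Set G) := {B : Set G | ∃ i, φ '' C i = B} with h𝒜'
    -- map from sets in G to sets in S
    set gmap : Set G → Set S := fun B =>
      if h : ∃ i, φ '' C i = B then C h.choose else C i₀ with hgmap
    have hgmem : ∀ B, gmap B ∈ Set.range C := by
      intro B
      by_cases h : ∃ i, φ '' C i = B
      · simp only [hgmap, dif_pos h]; exact ⟨h.choose, rfl⟩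
      · simp only [hgmap, dif_neg h]; exact ⟨i₀, rfl⟩
    have hgim : ∀ B, (∃ i, φ '' C i = B) → φ '' gmap B = B := by
      intro B h
      simp only [hgmap, dif_pos h]
      exact h.choose_spec
    -- map on families
    set mapF : {ℱ : Finset (Set G) // ℱ.Nonempty ∧ (↑ℱ : Set (Set G)) ⊆ 𝒜'} →
        {ℱ : Finset (Set S) // ℱ.Nonempty ∧ (↑ℱ : Set (Set S)) ⊆ Set.range C} :=
      fun ℱ => ⟨ℱ.1.image gmap, ℱ.2.1.image gmap, by
        intro B hB
        simp only [Finset.coe_image, Set.mem_image] at hB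
        obtain ⟨B', _, rfl⟩ := hB
        exact hgmem B'⟩ with hmapF
    -- map on finite subsets of G
    set FS : {F : Finset G // F.Nonempty} → {F : Finset S // F.Nonempty} :=
      fun F => ⟨F.1.attach.image (fun f => sF F.1 f.1 f.2),
        by
          obtain ⟨f0, hf0⟩ := F.2
          exact ⟨_, Finset.mem_image_of_mem _ (Finset.mem_attach _ ⟨f0, hf0⟩)⟩⟩ with hFS
    refine ⟨fun ℱ' => ⟨(K (mapF ℱ')).1.image φ, (K (mapF ℱ')).2.image φ⟩,
      fun ℋ' F => φ (cF F.1) + φ (x (mapF ℋ') (FS F)), ?_⟩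
    intro F ℱ' ℋ' hsub f hf
    have hsub' : (mapF ℱ').1 ⊆ (mapF ℋ').1 := Finset.image_subset_image hsub
    have hsmem : sF F.1 f hf ∈ (FS F).1 :=
      Finset.mem_image_of_mem _ (Finset.mem_attach _ ⟨f, hf⟩)
    obtain ⟨t, ht, hin⟩ := hK (FS F) (mapF ℱ') (mapF ℋ') hsub' (sF F.1 f hf) hsmem
    refine ⟨φ t, Finset.mem_image_of_mem φ ht, ?_⟩
    have heq : φ t + (f + (φ (cF F.1) + φ (x (mapF ℋ') (FS F))))
        = φ (t + (sF F.1 f hf + x (mapF ℋ') (FS F))) := by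
      rw [hhom, hhom, hsF F.1 f hf]
      abel
    rw [heq]
    intro B hB
    have hBmem : B ∈ (ℱ'.1 : Set (Set G)) := hB
    have hB𝒜 : ∃ i, φ '' C i = B := ℱ'.2.2 hBmem
    have hgB : gmap B ∈ (mapF ℱ').1 := Finset.mem_image_of_mem gmap hB
    have : t + (sF F.1 f hf + x (mapF ℋ') (FS F)) ∈ gmap B :=
      hin (gmap B) hgB
    rw [← hgim B hB𝒜]
    exact ⟨_, this, rfl⟩
end

section
/- Let (S,+) be a commutative cancellative semigroup and let (S−S,+) denote its difference group. If A ⊆ S is a C-set in S, then A is a C-set in S−S. -/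
universe u v

/-- Left fold of addition: `addList x [y₁,…,yₙ] = x + y₁ + ⋯ + yₙ`. -/
def addList {T : Type u} [Add T] : T → List T → T
  | x, [] => x
  | x, y :: l => addList (x + y) l

/-- A subset `A` of a commutative additive semigroup `T` is a *J-set* if for every finite
nonempty set `F` of sequences `f : ℕ → T` there exist `a ∈ T` and a finite nonempty
`H ⊆ ℕ` (encoded as a strictly increasing list `t₀ :: ts`) such that
`a + Σ_{t ∈ H} f(t) ∈ A` for every `f ∈ F`. -/
def AddJSet {T : Type u} [Add T] (A : Set T) : Prop :=
  ∀ F : Finset (ℕ → T), F.Nonempty →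
    ∃ (a : T) (t₀ : ℕ) (ts : List ℕ), (t₀ :: ts).Chain' (· < ·) ∧
      ∀ f ∈ F, a + addList (f t₀) (ts.map f) ∈ A

/-- A subset `A` of a commutative additive semigroup `T` is a *C-set* if there is a
downward directed family `⟨C_i⟩_{i ∈ I}` of subsets of `A` (here `r i j` means `i ≥ j`,
`(I,≥)` is a directed set and `i ≥ j → C_i ⊆ C_j`) such that (1) for each `i ∈ I` and
`x ∈ C_i` there is `j ∈ I` with `C_j ⊆ -x + C_i`, and (2) for each finite nonempty
`ℱ ⊆ I`, the intersection `⋂_{i ∈ ℱ} C_i` is a J-set in `T`. -/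
def AddCSet {T : Type u} [Add T] (A : Set T) : Prop :=
  ∃ (I : Type u) (r : I → I → Prop) (C : I → Set T),
    Nonempty I ∧ (∀ i, r i i) ∧ (∀ i j k, r i j → r j k → r i k) ∧
    (∀ i j, ∃ k, r k i ∧ r k j) ∧ (∀ i j, r i j → C i ⊆ C j) ∧
    (∀ i, C i ⊆ A) ∧
    (∀ i, ∀ x ∈ C i, ∃ j, C j ⊆ {y | x + y ∈ C i}) ∧
    (∀ ℱ : Finset I, ℱ.Nonempty → AddJSet (⋂ i ∈ ℱ, C i))

theorem addList_map_add {T : Type*} [AddCommSemigroup T] (l : List ℕ) (f g : ℕ → T) (x y : T) :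
    addList (x + y) (l.map fun t => f t + g t) = addList x (l.map f) + addList y (l.map g) := by
  induction l generalizing x y with
  | nil => rfl
  | cons t l ih =>
    simp only [List.map_cons, addList]
    rw [← ih]
    congr 1
    exact add_add_add_comm x y (f t) (g t)

theorem map_addList {S : Type u} {G : Type v} [Add S] [Add G] (φ : S → G)
    (hhom : ∀ x y, φ (x + y) = φ x + φ y) (x : S) (l : List S) :
    φ (addList x l) = addList (φ x) (l.map φ) := by
  induction l generalizing x with
  | nil => rfl
  | cons y l ih => simp [addList, ih, hhom]

theorem exists_phi_sum {S : Type u} {G : Type v} [AddCommSemigroup S] [AddCommGroup G]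
    (φ : S → G) (hhom : ∀ x y : S, φ (x + y) = φ x + φ y) {ι : Type*}
    (F : Finset ι) (g : ι → S) (x : S) : ∃ s : S, φ s = φ x + ∑ f ∈ F, φ (g f) := by
  classical
  induction F using Finset.induction generalizing x with
  | empty => exact ⟨x, by simp⟩
  | insert _ _ hnotmem ih =>
    rename_i a F
    obtain ⟨s, hs⟩ := ih (x + g a)
    exact ⟨s, by rw [hs, hhom, Finset.sum_insert hnotmem, add_assoc]⟩

theorem addJSet_image {S : Type u} {G : Type v}
    [AddCommSemigroup S] [AddCommGroup G]
    (φ : S → G) (hhom : ∀ x y : S, φ (x + y) = φ x + φ y)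
    (hdiff : ∀ g : G, ∃ a b : S, g = φ a - φ b)
    (D : Set S) (hD : AddJSet D) : AddJSet (φ '' D) := by
  classical
  intro F hF
  -- decompose each f n as φ (af f n) - φ (bf f n)
  choose af bf hab using fun (f : ℕ → G) (n : ℕ) => hdiff (f n)
  set B : ℕ → G := fun n => ∑ f ∈ F, φ (bf f n) with hB
  -- c f n ∈ S with φ (c f n) = f n + B n  (for f ∈ F)
  have hc : ∀ f : ℕ → G, ∀ n, ∃ s : S, φ s = φ (af f n) + ∑ f' ∈ F.erase f, φ (bf f' n) :=
    fun f n => exists_phi_sum φ hhom (F.erase f) (fun f' => bf f' n) (af f n)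
  choose c hcspec using hc
  have hcB : ∀ f ∈ F, ∀ n, φ (c f n) = f n + B n := by
    intro f hf n
    rw [hcspec, hB, hab f n]
    simp only []
    rw [← Finset.add_sum_erase F (fun f' => φ (bf f' n)) hf]
    abel
  obtain ⟨a', t₀, ts, hchain, hmem⟩ := hD (F.image c) (hF.image c)
  refine ⟨φ a' + addList (B t₀) (ts.map B), t₀, ts, hchain, ?_⟩
  intro f hf
  have key : addList (f t₀ + B t₀) (ts.map fun t => f t + B t)
      = addList (f t₀) (ts.map f) + addList (B t₀) (ts.map B) := addList_map_add ts f B _ _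
  have hcf : a' + addList (c f t₀) (ts.map (c f)) ∈ D :=
    hmem (c f) (Finset.mem_image_of_mem c hf)
  refine ⟨a' + addList (c f t₀) (ts.map (c f)), hcf, ?_⟩
  rw [hhom, map_addList φ hhom]
  have : (ts.map (c f)).map φ = ts.map fun t => f t + B t := by
    rw [List.map_map]
    exact List.map_congr_left fun t _ => hcB f hf t
  rw [this, hcB f hf, key]
  abel

theorem addJSet_mono {T : Type*} [Add T] {A B : Set T} (h : A ⊆ B) (hA : AddJSet A) :
    AddJSet B := by
  intro F hF
  obtain ⟨a, t₀, ts, hch, hm⟩ := hA F hF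
  exact ⟨a, t₀, ts, hch, fun f hf => h (hm f hf)⟩

/-- Let `(S,+)` be a commutative cancellative semigroup and let `(G,+)` together with the
injective additive embedding `φ : S → G` be its difference group.  If `A ⊆ S` is a C-set
in `S`, then `A` is a C-set in `G = S - S`. -/
theorem addCSet_image_of_addCSet {S : Type u} {G : Type v}
    [AddCommSemigroup S] [IsCancelAdd S] [AddCommGroup G]
    (φ : S → G) (hinj : Function.Injective φ)
    (hhom : ∀ x y : S, φ (x + y) = φ x + φ y)
    (hdiff : ∀ g : G, ∃ a b : S, g = φ a - φ b)
    (A : Set S) (hA : AddCSet A) : AddCSet (φ '' A) := by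
  classical
  obtain ⟨I, r, C, ⟨i₀⟩, hrefl, htrans, hdir, hmono, hsub, h1, h2⟩ := hA
  refine ⟨{B : Set G // ∃ i : I, B = φ '' C i}, fun B B' => B.1 ⊆ B'.1, fun B => B.1,
    ⟨⟨φ '' C i₀, i₀, rfl⟩⟩, fun B => subset_rfl, fun B B' B'' h h' => h.trans h',
    ?_, fun B B' h => h, ?_, ?_, ?_⟩
  · rintro ⟨B, i, rfl⟩ ⟨B', j, rfl⟩
    obtain ⟨k, hki, hkj⟩ := hdir i j
    exact ⟨⟨φ '' C k, k, rfl⟩, Set.image_mono (f := φ) (hmono k i hki),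
      Set.image_mono (f := φ) (hmono k j hkj)⟩
  · rintro ⟨B, i, rfl⟩
    exact Set.image_mono (f := φ) (hsub i)
  · rintro ⟨B, i, rfl⟩ x hx
    obtain ⟨s, hs, rfl⟩ := hx
    obtain ⟨j, hj⟩ := h1 i s hs
    refine ⟨⟨φ '' C j, j, rfl⟩, ?_⟩
    rintro y ⟨t, ht, rfl⟩
    exact ⟨s + t, hj ht, hhom s t⟩
  · intro ℱ hℱ
    set g : {B : Set G // ∃ i : I, B = φ '' C i} → I := fun B => Classical.choose B.2 with hg
    have hgspec : ∀ B, B.1 = φ '' C (g B) := fun B => Classical.choose_spec B.2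
    have hJ : AddJSet (⋂ i ∈ ℱ.image g, C i) := h2 (ℱ.image g) (hℱ.image g)
    refine addJSet_mono ?_ (addJSet_image φ hhom hdiff _ hJ)
    rintro y ⟨s, hs, rfl⟩
    simp only [Set.mem_iInter] at hs ⊢
    intro B hB
    rw [hgspec B]
    exact ⟨s, hs (g B) (Finset.mem_image_of_mem g hB), rfl⟩
end

section
/- Let Φ : (S,·) → (T,·) be a semigroup homomorphism such that Φ(S) is piecewise syndetic in T. If A ⊆ S is quasi-central in S, then Φ(A) is quasi-central in T. -/
universe u v

/-- A subset `A` of a semigroup `T` is *piecewise syndetic* if there is a finite nonempty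
`G ⊆ T` such that for every finite nonempty `F ⊆ T` there is `x ∈ T` with
`F·x ⊆ ⋃_{t ∈ G} t⁻¹A`, where `t⁻¹A = {y | t·y ∈ A}`. -/
def MulPiecewiseSyndetic {T : Type u} [Mul T] (A : Set T) : Prop :=
  ∃ G : Finset T, G.Nonempty ∧ ∀ F : Finset T, F.Nonempty →
    ∃ x : T, ∀ f ∈ F, ∃ t ∈ G, t * (f * x) ∈ A

/-- A subset `A` of a semigroup `T` is *quasi-central* if there is a downward directed
family `⟨C_i⟩_{i ∈ I}` of subsets of `A` (here `r i j` means `i ≥ j`, `(I,≥)` is a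
directed set and `i ≥ j → C_i ⊆ C_j`) such that (1) for each `i ∈ I` and `x ∈ C_i` there
is `j ∈ I` with `C_j ⊆ x⁻¹C_i`, and (2) each `C_i` is piecewise syndetic in `T`. -/
def MulQuasiCentral {T : Type u} [Mul T] (A : Set T) : Prop :=
  ∃ (I : Type u) (r : I → I → Prop) (C : I → Set T),
    Nonempty I ∧ (∀ i, r i i) ∧ (∀ i j k, r i j → r j k → r i k) ∧
    (∀ i j, ∃ k, r k i ∧ r k j) ∧ (∀ i j, r i j → C i ⊆ C j) ∧
    (∀ i, C i ⊆ A) ∧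
    (∀ i, ∀ x ∈ C i, ∃ j, C j ⊆ {y | x * y ∈ C i}) ∧
    (∀ i, MulPiecewiseSyndetic (C i))

/-- The image of a piecewise syndetic set under a homomorphism with piecewise
syndetic range is piecewise syndetic. -/
lemma mulPiecewiseSyndetic_image {S : Type u} {T : Type v}
    [Semigroup S] [Semigroup T] (Φ : S → T)
    (hΦ : ∀ x y : S, Φ (x * y) = Φ x * Φ y)
    (hrange : MulPiecewiseSyndetic (Set.range Φ))
    (B : Set S) (hB : MulPiecewiseSyndetic B) :
    MulPiecewiseSyndetic (Φ '' B) := by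
  classical
  obtain ⟨G₁, hG₁ne, hG₁⟩ := hB
  obtain ⟨G₂, hG₂ne, hG₂⟩ := hrange
  refine ⟨(G₁ ×ˢ G₂).image (fun p => Φ p.1 * p.2),
    (hG₁ne.product hG₂ne).image _, ?_⟩
  intro F hF
  obtain ⟨x₂, hx₂⟩ := hG₂ F hF
  -- for each f ∈ F pick t_f ∈ G₂ and s_f ∈ S with Φ s_f = t_f * (f * x₂)
  choose t ht s hs using fun (f : F) => hx₂ f.1 f.2
  have hs' : ∀ f : F, Φ (s f) = t f * (f.1 * x₂) := fun f => hs f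
  have hFne : F.attach.Nonempty := Finset.attach_nonempty_iff.mpr hF
  obtain ⟨x₁, hx₁⟩ := hG₁ (F.attach.image s) (hFne.image s)
  refine ⟨x₂ * Φ x₁, ?_⟩
  intro f hf
  obtain ⟨g, hg, hgB⟩ := hx₁ (s ⟨f, hf⟩) (Finset.mem_image_of_mem s (F.mem_attach ⟨f, hf⟩))
  refine ⟨Φ g * t ⟨f, hf⟩, Finset.mem_image.mpr ⟨(g, t ⟨f, hf⟩),
    Finset.mem_product.mpr ⟨hg, ht ⟨f, hf⟩⟩, rfl⟩, ?_⟩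
  refine ⟨g * (s ⟨f, hf⟩ * x₁), hgB, ?_⟩
  rw [hΦ, hΦ, hs' ⟨f, hf⟩]
  simp only [mul_assoc]

/-- If `Φ : S → T` is a semigroup homomorphism such that `Φ(S)` is piecewise syndetic in
`T`, and `A ⊆ S` is quasi-central in `S`, then `Φ(A)` is quasi-central in `T`. -/
theorem mulQuasiCentral_image_of_mulQuasiCentral {S : Type u} {T : Type v}
    [Semigroup S] [Semigroup T] (Φ : S → T)
    (hΦ : ∀ x y : S, Φ (x * y) = Φ x * Φ y)
    (hrange : MulPiecewiseSyndetic (Set.range Φ))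
    (A : Set S) (hA : MulQuasiCentral A) : MulQuasiCentral (Φ '' A) := by
  classical
  obtain ⟨I, r, C, ⟨i₀⟩, hrefl, htrans, hdir, hmono, hsub, hshift, hps⟩ := hA
  refine ⟨{D : Set T // ∃ i, D = Φ '' C i}, fun a b => a.1 ⊆ b.1,
    fun a => a.1, ⟨⟨Φ '' C i₀, i₀, rfl⟩⟩,
    fun a => subset_rfl, fun a b c hab hbc => hab.trans hbc, ?_,
    fun a b h => h, ?_, ?_, ?_⟩
  · rintro ⟨Da, ia, rfl⟩ ⟨Db, ib, rfl⟩
    obtain ⟨k, hki, hkj⟩ := hdir ia ib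
    exact ⟨⟨Φ '' C k, k, rfl⟩, Set.image_mono (hmono _ _ hki),
      Set.image_mono (hmono _ _ hkj)⟩
  · rintro ⟨Da, ia, rfl⟩
    exact Set.image_mono (hsub ia)
  · rintro ⟨Da, ia, rfl⟩ x hx
    obtain ⟨sx, hsx, rfl⟩ := hx
    obtain ⟨j, hj⟩ := hshift ia sx hsx
    refine ⟨⟨Φ '' C j, j, rfl⟩, ?_⟩
    rintro y ⟨c, hc, rfl⟩
    exact ⟨sx * c, hj hc, hΦ sx c⟩
  · rintro ⟨Da, ia, rfl⟩
    exact mulPiecewiseSyndetic_image Φ hΦ hrange _ (hps ia)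
end

section
/- Let Φ : (S,·) → (T,·) be a semigroup homomorphism such that Φ(S) is piecewise syndetic in T. If A ⊆ S is central in S, then Φ(A) is central in T. -/
universe u v

/-- A family `𝒜` of subsets of a semigroup `T` is *collectionwise piecewise syndetic* if
there exist functions `K` from the finite nonempty subfamilies of `𝒜` to the finite
nonempty subsets of `T`, and `x` from (finite nonempty subfamilies of `𝒜`) × (finite
nonempty subsets of `T`) to `T`, such that for every finite nonempty `F ⊆ T` and all
finite nonempty subfamilies `ℱ ⊆ ℋ` of `𝒜` one has
`F·x(ℋ,F) ⊆ ⋃_{t ∈ K(ℱ)} t⁻¹(⋂ℱ)`. -/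
def MulCollectionwisePS {T : Type u} [Mul T] (𝒜 : Set (Set T)) : Prop :=
  ∃ (K : {ℱ : Finset (Set T) // ℱ.Nonempty ∧ (↑ℱ : Set (Set T)) ⊆ 𝒜} →
        {B : Finset T // B.Nonempty})
    (x : {ℱ : Finset (Set T) // ℱ.Nonempty ∧ (↑ℱ : Set (Set T)) ⊆ 𝒜} →
        {F : Finset T // F.Nonempty} → T),
    ∀ (F : {F : Finset T // F.Nonempty})
      (ℱ ℋ : {ℱ : Finset (Set T) // ℱ.Nonempty ∧ (↑ℱ : Set (Set T)) ⊆ 𝒜}),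
      ℱ.1 ⊆ ℋ.1 →
      ∀ f ∈ F.1, ∃ t ∈ (K ℱ).1, t * (f * x ℋ F) ∈ ⋂₀ (↑ℱ.1 : Set (Set T))

/-- A subset `A` of a semigroup `T` is *central* if there is a downward directed family
`⟨C_i⟩_{i ∈ I}` of subsets of `A` (here `r i j` means `i ≥ j`, `(I,≥)` is a directed set
and `i ≥ j → C_i ⊆ C_j`) such that (1) for each `i ∈ I` and `x ∈ C_i` there is `j ∈ I`
with `C_j ⊆ x⁻¹C_i`, and (2) the family `{C_i : i ∈ I}` is collectionwise piecewise
syndetic in `T`. -/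
def MulCentral {T : Type u} [Mul T] (A : Set T) : Prop :=
  ∃ (I : Type u) (r : I → I → Prop) (C : I → Set T),
    Nonempty I ∧ (∀ i, r i i) ∧ (∀ i j k, r i j → r j k → r i k) ∧
    (∀ i j, ∃ k, r k i ∧ r k j) ∧ (∀ i j, r i j → C i ⊆ C j) ∧
    (∀ i, C i ⊆ A) ∧
    (∀ i, ∀ x ∈ C i, ∃ j, C j ⊆ {y | x * y ∈ C i}) ∧
    MulCollectionwisePS (Set.range C)

theorem aux_cps {S : Type u} {T : Type v} [Semigroup S] [Semigroup T]
    (Φ : S → T) (hΦ : ∀ x y : S, Φ (x * y) = Φ x * Φ y)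
    (hrange : MulPiecewiseSyndetic (Set.range Φ))
    {I : Type u} [hI : Nonempty I] (C : I → Set S)
    (hCPS : MulCollectionwisePS (Set.range C)) :
    MulCollectionwisePS
      (Set.range (fun b : ↥(Set.range (fun i => Φ '' C i)) => (b : Set T))) := by
  classical
  obtain ⟨G, hGne, hG⟩ := hrange
  obtain ⟨K, xS, hx⟩ := hCPS
  obtain ⟨g0, hg0⟩ := hGne
  have hSne : Nonempty S := by
    obtain ⟨z0, hz0⟩ := hG {g0} ⟨g0, Finset.mem_singleton_self g0⟩
    obtain ⟨t, -, ht⟩ := hz0 g0 (Finset.mem_singleton_self g0)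
    obtain ⟨s0, -⟩ := ht
    exact ⟨s0⟩
  have hpick : ∀ B : Set T, ∃ i : I,
      B ∈ Set.range (fun i => Φ '' C i) → Φ '' C i = B := by
    intro B
    by_cases h : B ∈ Set.range (fun i => Φ '' C i)
    · obtain ⟨i, hi⟩ := h
      exact ⟨i, fun _ => hi⟩
    · exact ⟨Classical.arbitrary I, fun h' => absurd h' h⟩
  choose pick hpick using hpick
  have hz : ∀ F : {F : Finset T // F.Nonempty}, ∃ zF : T, ∀ f ∈ F.1,
      ∃ g, g ∈ G ∧ ∃ s : S, Φ s = g * (f * zF) := by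
    intro F
    obtain ⟨zF, hzF⟩ := hG F.1 F.2
    refine ⟨zF, fun f hf => ?_⟩
    obtain ⟨g, hg, hmem⟩ := hzF f hf
    obtain ⟨s, hs⟩ := hmem
    exact ⟨g, hg, s, hs⟩
  choose z hz using hz
  have hgs : ∀ (F : {F : Finset T // F.Nonempty}) (f : T), ∃ (g : T) (s : S),
      f ∈ F.1 → g ∈ G ∧ Φ s = g * (f * z F) := by
    intro F f
    by_cases hf : f ∈ F.1
    · obtain ⟨g, hg, s, hs⟩ := hz F f hf
      exact ⟨g, s, fun _ => ⟨hg, hs⟩⟩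
    · exact ⟨g0, Classical.arbitrary S, fun h => absurd h hf⟩
  choose gf sf hgs using hgs
  -- the translated subfamily function
  have htoS : ∃ toS : {ℱ : Finset (Set T) // ℱ.Nonempty ∧ (↑ℱ : Set (Set T)) ⊆
        Set.range (fun b : ↥(Set.range (fun i => Φ '' C i)) => (b : Set T))} →
      {ℱ : Finset (Set S) // ℱ.Nonempty ∧ (↑ℱ : Set (Set S)) ⊆ Set.range C},
      ∀ ℱ, (toS ℱ).1 = ℱ.1.image (fun B => C (pick B)) := by
    have hmem : ∀ ℱ : {ℱ : Finset (Set T) // ℱ.Nonempty ∧ (↑ℱ : Set (Set T)) ⊆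
        Set.range (fun b : ↥(Set.range (fun i => Φ '' C i)) => (b : Set T))},
        (↑(ℱ.1.image (fun B => C (pick B))) : Set (Set S)) ⊆ Set.range C := by
      intro ℱ B hB
      simp only [Finset.coe_image, Set.mem_image] at hB
      obtain ⟨B', -, rfl⟩ := hB
      exact ⟨pick B', rfl⟩
    exact ⟨fun ℱ => ⟨ℱ.1.image (fun B => C (pick B)), ℱ.2.1.image _, hmem ℱ⟩,
      fun _ => rfl⟩
  obtain ⟨toS, htoS⟩ := htoS
  have hFs : ∃ Fs : {F : Finset T // F.Nonempty} → {F : Finset S // F.Nonempty},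
      ∀ F, (Fs F).1 = F.1.image (sf F) :=
    ⟨fun F => ⟨F.1.image (sf F), F.2.image _⟩, fun _ => rfl⟩
  obtain ⟨Fs, hFs⟩ := hFs
  refine ⟨fun ℱ => ⟨((K (toS ℱ)).1 ×ˢ G).image (fun p => Φ p.1 * p.2),
      ((K (toS ℱ)).2.product ⟨g0, hg0⟩).image _⟩,
    fun ℋ F => z F * Φ (xS (toS ℋ) (Fs F)), ?_⟩
  intro F ℱ ℋ hsub f hf
  obtain ⟨hgG, hsf⟩ := hgs F f hf
  have hsmem : sf F f ∈ (Fs F).1 := by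
    rw [hFs]; exact Finset.mem_image_of_mem _ hf
  have hsubS : (toS ℱ).1 ⊆ (toS ℋ).1 := by
    rw [htoS, htoS]; exact Finset.image_subset_image hsub
  obtain ⟨u, huK, hu⟩ := hx (Fs F) (toS ℱ) (toS ℋ) hsubS (sf F f) hsmem
  refine ⟨Φ u * gf F f,
    Finset.mem_image.2 ⟨(u, gf F f), Finset.mem_product.2 ⟨huK, hgG⟩, rfl⟩, ?_⟩
  have key : Φ u * gf F f * (f * (z F * Φ (xS (toS ℋ) (Fs F)))) =
      Φ (u * (sf F f * xS (toS ℋ) (Fs F))) := by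
    rw [hΦ, hΦ, hsf]
    simp only [mul_assoc]
  rw [key]
  refine Set.mem_sInter.2 fun B hB => ?_
  have hBr : B ∈ Set.range (fun i => Φ '' C i) := by
    obtain ⟨b, hb⟩ := ℱ.2.2 hB
    exact hb ▸ b.2
  have hmem2 : u * (sf F f * xS (toS ℋ) (Fs F)) ∈ C (pick B) := by
    refine Set.mem_sInter.1 hu (C (pick B)) ?_
    rw [htoS]
    exact Finset.mem_coe.2 (Finset.mem_image_of_mem _ hB)
  rw [← hpick B hBr]
  exact ⟨_, hmem2, rfl⟩

/-- If `Φ : S → T` is a semigroup homomorphism such that `Φ(S)` is piecewise syndetic in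
`T`, and `A ⊆ S` is central in `S`, then `Φ(A)` is central in `T`. -/
theorem mulCentral_image_of_mulCentral {S : Type u} {T : Type v}
    [Semigroup S] [Semigroup T] (Φ : S → T)
    (hΦ : ∀ x y : S, Φ (x * y) = Φ x * Φ y)
    (hrange : MulPiecewiseSyndetic (Set.range Φ))
    (A : Set S) (hA : MulCentral A) : MulCentral (Φ '' A) := by
  obtain ⟨I, r, C, hne, hrefl, htrans, hdir, hmono, hsubA, hshift, hCPS⟩ := hA
  haveI := hne
  refine ⟨↥(Set.range (fun i => Φ '' C i)),
    fun b b' => (b : Set T) ⊆ (b' : Set T),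
    fun b => (b : Set T),
    ⟨⟨Φ '' C (Classical.arbitrary I), ⟨_, rfl⟩⟩⟩,
    fun b => subset_rfl,
    fun a b c hab hbc => hab.trans hbc,
    ?_, fun b b' h => h, ?_, ?_,
    aux_cps Φ hΦ hrange C hCPS⟩
  · intro b b'
    obtain ⟨i, hi⟩ := b.2
    obtain ⟨j, hj⟩ := b'.2
    have hi' : Φ '' C i = (b : Set T) := hi
    have hj' : Φ '' C j = (b' : Set T) := hj
    obtain ⟨k, hki, hkj⟩ := hdir i j
    refine ⟨⟨Φ '' C k, k, rfl⟩, ?_, ?_⟩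
    · show Φ '' C k ⊆ (b : Set T)
      rw [← hi']; exact Set.image_mono (f := Φ) (hmono k i hki)
    · show Φ '' C k ⊆ (b' : Set T)
      rw [← hj']; exact Set.image_mono (f := Φ) (hmono k j hkj)
  · intro b
    obtain ⟨i, hi⟩ := b.2
    have hi' : Φ '' C i = (b : Set T) := hi
    show (b : Set T) ⊆ Φ '' A
    rw [← hi']
    exact Set.image_mono (f := Φ) (hsubA i)
  · intro b x hxb
    obtain ⟨i, hi⟩ := b.2
    have hi' : Φ '' C i = (b : Set T) := hi
    have hx' : x ∈ Φ '' C i := by rw [hi']; exact hxb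
    obtain ⟨s, hsC, hsx⟩ := hx'
    obtain ⟨j, hj⟩ := hshift i s hsC
    refine ⟨⟨Φ '' C j, j, rfl⟩, ?_⟩
    rintro y ⟨c, hc, rfl⟩
    show x * Φ c ∈ (b : Set T)
    rw [← hi', ← hsx, ← hΦ]
    exact ⟨s * c, hj hc, rfl⟩
end
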